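/- (Geometric plasticity principle.) Let A_1, …, A_5 be points of a closed polyhedron in ℝ³, not all collinear, with positive weights B_1, …, B_5 such that the floating case holds: for every i, ‖Σ_{j≠i} B_j u(A_i, A_j)‖ > B_i. Let A_0 be the (unique) weighted Fermat–Torricelli point of A_1,…,A_5, and for each i let A_i' = A_0 + t_i (A_i − A_0) with t_i > 0 be a point on the ray from A_0 through A_i, carrying the same weight B_i. Assume that the new configuration again satisfies the floating condition: for every i, ‖Σ_{j≠i} B_j u(A_i', A_j')‖ > B_i. Then the weighted Fermat–Torricelli point A_0' of A_1', …, A_5' (with weights B_1,…,B_5) is identical to A_0. -/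

import Mathlib

open RealInnerProductSpace

private lemma norm_sub_smul_le_aux {E : Type*} [NormedAddCommGroup E] [InnerProductSpace ℝ E]
    (v d : E) (s : ℝ) (hv : v ≠ 0) (hd : ‖d‖ = 1) :
    ‖v - s • d‖ ≤ ‖v‖ - s * ⟪d, v⟫ / ‖v‖ + s ^ 2 / (2 * ‖v‖) := by
  have ha : (0:ℝ) < ‖v‖ := norm_pos_iff.mpr hv
  have hpa : |⟪d, v⟫| ≤ ‖v‖ := by
    have := abs_real_inner_le_norm d v
    simpa [hd] using this
  set a := ‖v‖ with hadef
  set p := ⟪d, v⟫ with hpdef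
  set R := a - s * p / a + s ^ 2 / (2 * a) with hR
  clear_value R
  have habs : |s| * |p| ≤ |s| * a := mul_le_mul_of_nonneg_left hpa (abs_nonneg s)
  have hsp : s * p ≤ |s| * a := le_trans (le_trans (le_abs_self _) (abs_mul s p).le) habs
  have hR0 : 0 ≤ R := by
    rw [hR]
    have h1 : 0 ≤ a ^ 2 - s * p + s ^ 2 / 2 := by
      nlinarith [sq_nonneg (a - |s|), sq_abs s, abs_nonneg s]
    have : a - s * p / a + s ^ 2 / (2 * a) = (a ^ 2 - s * p + s ^ 2 / 2) / a := by
      field_simp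
    rw [this]
    positivity
  have hsq : ‖v - s • d‖ ^ 2 ≤ R ^ 2 := by
    have hn : ‖v - s • d‖ ^ 2 = a ^ 2 - 2 * (s * p) + s ^ 2 := by
      rw [norm_sub_sq_real, real_inner_smul_right, real_inner_comm]
      rw [norm_smul]
      simp [hd, mul_pow, sq_abs]
      rw [hadef, hpdef]
    have hex : R ^ 2 - (a ^ 2 - 2 * (s * p) + s ^ 2) = (s * p / a - s ^ 2 / (2 * a)) ^ 2 := by
      rw [hR]; field_simp; ring
    have hq := sq_nonneg (s * p / a - s ^ 2 / (2 * a))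
    rw [hn]
    linarith [hq, hex]
  calc ‖v - s • d‖ ≤ R := le_of_pow_le_pow_left₀ two_ne_zero hR0 hsq
    _ = _ := by rw [hR]

theorem geometric_plasticity_principle
    (A : Fin 5 → EuclideanSpace ℝ (Fin 3))
    (hA : ¬ Collinear ℝ (Set.range A))
    (B : Fin 5 → ℝ) (hB : ∀ i, 0 < B i)
    (hfloat : ∀ i, B i <
      ‖∑ j ∈ Finset.univ.erase i, B j • (‖A j - A i‖⁻¹ • (A j - A i))‖)
    (A₀ : EuclideanSpace ℝ (Fin 3))
    (hmin : ∀ X : EuclideanSpace ℝ (Fin 3),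
      ∑ i, B i * ‖A₀ - A i‖ ≤ ∑ i, B i * ‖X - A i‖)
    (t : Fin 5 → ℝ) (ht : ∀ i, 0 < t i)
    (A' : Fin 5 → EuclideanSpace ℝ (Fin 3))
    (hA' : ∀ i, A' i = A₀ + t i • (A i - A₀))
    (hfloat' : ∀ i, B i <
      ‖∑ j ∈ Finset.univ.erase i, B j • (‖A' j - A' i‖⁻¹ • (A' j - A' i))‖) :
    (∀ X : EuclideanSpace ℝ (Fin 3),
        ∑ i, B i * ‖A₀ - A' i‖ ≤ ∑ i, B i * ‖X - A' i‖) ∧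
      ∀ A₀' : EuclideanSpace ℝ (Fin 3),
        (∀ X : EuclideanSpace ℝ (Fin 3),
          ∑ i, B i * ‖A₀' - A' i‖ ≤ ∑ i, B i * ‖X - A' i‖) → A₀' = A₀ := by
  classical
  -- unit vectors from A₀ toward the points
  set u : Fin 5 → EuclideanSpace ℝ (Fin 3) := fun j => ‖A j - A₀‖⁻¹ • (A j - A₀) with hu
  set w : EuclideanSpace ℝ (Fin 3) := ∑ j, B j • u j with hwdef
  set σ : ℝ := ∑ j ∈ Finset.univ.filter (fun j => A j = A₀), B j with hσdef
  have hσ0 : 0 ≤ σ := Finset.sum_nonneg fun j _ => (hB j).le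
  have husub : ∀ j, A' j - A₀ = t j • (A j - A₀) := by
    intro j; rw [hA' j]; abel
  have huzero : ∀ j, A j = A₀ → u j = 0 := by
    intro j h; simp [hu, h, sub_self]
  have hunorm : ∀ j, A j ≠ A₀ → ‖u j‖ = 1 := by
    intro j h
    have : A j - A₀ ≠ 0 := sub_ne_zero.mpr h
    simp [hu, norm_smul, norm_pos_iff.mpr this, inv_mul_cancel₀ (norm_ne_zero_iff.mpr this)]
  have hu_eq : ∀ j, u j = ‖A j - A₀‖⁻¹ • (A j - A₀) := fun j => rfl
  have hnw : ∀ j, A j ≠ A₀ → (0:ℝ) < ‖A j - A₀‖ := fun j h =>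
    norm_pos_iff.mpr (sub_ne_zero.mpr h)
  -- KEY: the subgradient bound ‖w‖ ≤ σ
  have hw : ‖w‖ ≤ σ := by
    by_contra hcon
    push_neg at hcon
    have hw0 : w ≠ 0 := by
      intro h; rw [h, norm_zero] at hcon; linarith
    set d : EuclideanSpace ℝ (Fin 3) := ‖w‖⁻¹ • w with hd
    have hdnorm : ‖d‖ = 1 := norm_smul_inv_norm hw0
    set K : ℝ := ∑ j, (if A j = A₀ then 0 else B j / (2 * ‖A j - A₀‖)) with hKdef
    have hK0 : 0 ≤ K := by
      apply Finset.sum_nonneg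
      intro j _
      split_ifs with h
      · exact le_refl 0
      · exact div_nonneg (hB j).le (by positivity)
    set s : ℝ := (‖w‖ - σ) / (K + 1) with hs
    have hspos : 0 < s := div_pos (by linarith) (by linarith)
    have perterm : ∀ j, B j * ‖(A₀ + s • d) - A j‖ ≤
        B j * ‖A₀ - A j‖ - s * ⟪d, B j • u j⟫
          + s ^ 2 * (if A j = A₀ then 0 else B j / (2 * ‖A j - A₀‖))
          + (if A j = A₀ then s * B j else 0) := by
      intro j
      by_cases h : A j = A₀
      · have h1 : (A₀ + s • d) - A j = s • d := by rw [h]; abel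
        rw [h1, huzero j h]
        simp [norm_smul, hdnorm, abs_of_pos hspos, h, if_pos, mul_comm]
      · have hv : A j - A₀ ≠ 0 := sub_ne_zero.mpr h
        have h1 : (A₀ + s • d) - A j = -((A j - A₀) - s • d) := by abel
        rw [h1, norm_neg]
        have h2 := norm_sub_smul_le_aux (A j - A₀) d s hv hdnorm
        have h3 := mul_le_mul_of_nonneg_left h2 (hB j).le
        have h4 : ⟪d, B j • u j⟫ = B j * (⟪d, A j - A₀⟫ / ‖A j - A₀‖) := by
          rw [real_inner_smul_right, hu_eq, real_inner_smul_right, div_eq_inv_mul]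
        have h5 : ‖A₀ - A j‖ = ‖A j - A₀‖ := norm_sub_rev _ _
        rw [if_neg h, if_neg h, h4, h5]
        have hvn : (0:ℝ) < ‖A j - A₀‖ := norm_pos_iff.mpr hv
        calc B j * ‖A j - A₀ - s • d‖
            ≤ B j * (‖A j - A₀‖ - s * ⟪d, A j - A₀⟫ / ‖A j - A₀‖
                + s ^ 2 / (2 * ‖A j - A₀‖)) := h3
          _ = B j * ‖A j - A₀‖ - s * (B j * (⟪d, A j - A₀⟫ / ‖A j - A₀‖))
                + s ^ 2 * (B j / (2 * ‖A j - A₀‖)) + 0 := by ring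
    have hsum := Finset.sum_le_sum (fun j (_ : j ∈ Finset.univ) => perterm j)
    rw [Finset.sum_add_distrib, Finset.sum_add_distrib, Finset.sum_sub_distrib] at hsum
    have hwne : ‖w‖ ≠ 0 := norm_ne_zero_iff.mpr hw0
    have hdw : ⟪d, w⟫ = ‖w‖ := by
      rw [hd, real_inner_smul_left, real_inner_self_eq_norm_sq, pow_two, ← mul_assoc,
        inv_mul_cancel₀ hwne, one_mul]
    have e1 : ∑ j, s * ⟪d, B j • u j⟫ = s * ‖w‖ := by
      rw [← Finset.mul_sum, ← inner_sum, ← hwdef, hdw]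
    have e2 : ∑ j, s ^ 2 * (if A j = A₀ then 0 else B j / (2 * ‖A j - A₀‖)) = s ^ 2 * K := by
      rw [hKdef, Finset.mul_sum]
    have e3 : ∑ j, (if A j = A₀ then s * B j else 0) = s * σ := by
      rw [hσdef, Finset.mul_sum, Finset.sum_filter]
    rw [e1, e2, e3] at hsum
    have hm := hmin (A₀ + s • d)
    have h7 : s * ‖w‖ ≤ s ^ 2 * K + s * σ := by linarith
    have hsK : s * (K + 1) = ‖w‖ - σ := by
      rw [hs]; field_simp
    have h8 : s ^ 2 * K + s ^ 2 = s * ‖w‖ - s * σ := by linear_combination s * hsK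
    linarith [h7, h8, pow_pos hspos 2]
  -- Part 1 : A₀ minimizes the new objective
  have part1 : ∀ X : EuclideanSpace ℝ (Fin 3), ∑ i, B i * ‖A₀ - A' i‖ ≤ ∑ i, B i * ‖X - A' i‖ := by
    intro X
    have perterm : ∀ j, B j * ‖A₀ - A' j‖ - ⟪X - A₀, B j • u j⟫
        + (if A j = A₀ then B j * ‖X - A₀‖ else 0) ≤ B j * ‖X - A' j‖ := by
      intro j
      by_cases h : A j = A₀
      · have hAj : A' j = A₀ := by
          have := husub j; rw [h, sub_self, smul_zero] at this
          exact sub_eq_zero.mp this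
        rw [hAj, huzero j h]
        simp [h]
      · have hv : A j - A₀ ≠ 0 := sub_ne_zero.mpr h
        have hvn : (0:ℝ) < ‖A j - A₀‖ := norm_pos_iff.mpr hv
        rw [if_neg h]
        have hn1 : ‖-u j‖ = 1 := by rw [norm_neg]; exact hunorm j h
        have h1 : ⟪X - A' j, -u j⟫ ≤ ‖X - A' j‖ := by
          calc ⟪X - A' j, -u j⟫ ≤ ‖X - A' j‖ * ‖-u j‖ := real_inner_le_norm _ _
            _ = ‖X - A' j‖ := by rw [hn1, mul_one]
        have h2 : ⟪X - A' j, -u j⟫ = ‖A₀ - A' j‖ - ⟪X - A₀, u j⟫ := by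
          have hx : X - A' j = (X - A₀) + (A₀ - A' j) := by abel
          have hy : A₀ - A' j = -(t j • (A j - A₀)) := by
            rw [← husub j]; abel
          rw [hx, inner_add_left, inner_neg_right, hy, inner_neg_left, inner_neg_right,
            neg_neg]
          have hz : ⟪t j • (A j - A₀), u j⟫ = t j * ‖A j - A₀‖ := by
            rw [real_inner_smul_left, hu_eq, real_inner_smul_right,
              real_inner_self_eq_norm_sq]
            have hne := (hnw j h).ne'
            field_simp
          rw [hz, norm_neg, norm_smul, Real.norm_eq_abs, abs_of_pos (ht j)]
          ring
        rw [h2] at h1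
        have h3 := mul_le_mul_of_nonneg_left h1 (hB j).le
        have h4 : ⟪X - A₀, B j • u j⟫ = B j * ⟪X - A₀, u j⟫ := real_inner_smul_right _ _ _
        rw [h4]
        calc B j * ‖A₀ - A' j‖ - B j * ⟪X - A₀, u j⟫ + 0
            = B j * (‖A₀ - A' j‖ - ⟪X - A₀, u j⟫) := by ring
          _ ≤ B j * ‖X - A' j‖ := h3
    have hsum := Finset.sum_le_sum (fun j (_ : j ∈ Finset.univ) => perterm j)
    rw [Finset.sum_add_distrib, Finset.sum_sub_distrib] at hsum
    have e1 : ∑ j, ⟪X - A₀, B j • u j⟫ = ⟪X - A₀, w⟫ := by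
      rw [← inner_sum, ← hwdef]
    have e3 : ∑ j, (if A j = A₀ then B j * ‖X - A₀‖ else 0) = σ * ‖X - A₀‖ := by
      rw [hσdef, Finset.sum_mul, Finset.sum_filter]
    rw [e1, e3] at hsum
    have h5 : ⟪X - A₀, w⟫ ≤ ‖X - A₀‖ * σ := by
      calc ⟪X - A₀, w⟫ ≤ ‖X - A₀‖ * ‖w‖ := real_inner_le_norm _ _
        _ ≤ ‖X - A₀‖ * σ := mul_le_mul_of_nonneg_left hw (norm_nonneg _)
    linarith [hsum, h5]
  refine ⟨part1, ?_⟩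
  -- Part 2: uniqueness
  intro A₀' hmin'
  by_contra hne
  have hv0 : A₀' - A₀ ≠ 0 := sub_ne_zero.mpr hne
  have hm : ∑ i, B i * ‖A₀' - A' i‖ = ∑ i, B i * ‖A₀ - A' i‖ :=
    le_antisymm (hmin' A₀) (part1 A₀')
  set M : EuclideanSpace ℝ (Fin 3) := (2⁻¹ : ℝ) • (A₀ + A₀') with hM
  have hMsub : ∀ i, M - A' i = (2⁻¹ : ℝ) • ((A₀ - A' i) + (A₀' - A' i)) := by
    intro i
    rw [hM]
    module
  have hterm : ∀ i ∈ Finset.univ, B i * ‖M - A' i‖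
      ≤ B i * ((‖A₀ - A' i‖ + ‖A₀' - A' i‖) / 2) := by
    intro i _
    apply mul_le_mul_of_nonneg_left _ (hB i).le
    rw [hMsub i, norm_smul]
    have : ‖(2⁻¹:ℝ)‖ = 2⁻¹ := by norm_num
    rw [this]
    calc (2⁻¹:ℝ) * ‖(A₀ - A' i) + (A₀' - A' i)‖
        ≤ 2⁻¹ * (‖A₀ - A' i‖ + ‖A₀' - A' i‖) := by
          apply mul_le_mul_of_nonneg_left (norm_add_le _ _); norm_num
      _ = (‖A₀ - A' i‖ + ‖A₀' - A' i‖) / 2 := by ring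
  have hgsum : ∑ i, B i * ((‖A₀ - A' i‖ + ‖A₀' - A' i‖) / 2)
      = ∑ i, B i * ‖A₀ - A' i‖ := by
    have : ∀ i, B i * ((‖A₀ - A' i‖ + ‖A₀' - A' i‖) / 2)
        = (B i * ‖A₀ - A' i‖ + B i * ‖A₀' - A' i‖) / 2 := by intro i; ring
    simp_rw [this]
    rw [← Finset.sum_div, Finset.sum_add_distrib, hm]
    ring
  have hsumeq : ∑ i, B i * ‖M - A' i‖
      = ∑ i, B i * ((‖A₀ - A' i‖ + ‖A₀' - A' i‖) / 2) := by
    have h1 := Finset.sum_le_sum hterm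
    have h2 := part1 M
    rw [hgsum]
    rw [hgsum] at h1
    linarith
  have heq := (Finset.sum_eq_sum_iff_of_le hterm).mp hsumeq
  -- each point A' i lies on the line through A₀ and A₀'
  have hline : ∀ i, ∃ c : ℝ, A' i - A₀ = c • (A₀' - A₀) := by
    intro i
    have h1 := heq i (Finset.mem_univ i)
    have h2 : ‖M - A' i‖ = (‖A₀ - A' i‖ + ‖A₀' - A' i‖) / 2 :=
      mul_left_cancel₀ (hB i).ne' h1
    rw [hMsub i, norm_smul] at h2
    have h3 : ‖(A₀ - A' i) + (A₀' - A' i)‖ = ‖A₀ - A' i‖ + ‖A₀' - A' i‖ := by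
      have : ‖(2⁻¹:ℝ)‖ = 2⁻¹ := by norm_num
      rw [this] at h2
      linarith
    have hsr : SameRay ℝ (A₀ - A' i) (A₀' - A' i) := sameRay_iff_norm_add.mpr h3
    obtain ⟨e, a, b, _, _, _, hae, hbe⟩ := hsr.exists_eq_smul
    have hab : A₀' - A₀ = (b - a) • e := by
      have : A₀' - A₀ = (A₀' - A' i) - (A₀ - A' i) := by abel
      rw [this, hae, hbe, sub_smul]
    have hba : b - a ≠ 0 := by
      intro h
      rw [h, zero_smul] at hab
      exact hv0 hab
    have he' : e = (b - a)⁻¹ • (A₀' - A₀) := by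
      rw [hab, smul_smul, inv_mul_cancel₀ hba, one_smul]
    refine ⟨-a * (b - a)⁻¹, ?_⟩
    have : A' i - A₀ = -(A₀ - A' i) := by abel
    rw [this, hae, he', smul_smul, ← neg_smul]
    ring_nf
  -- hence all A i are collinear, contradiction
  apply hA
  rw [collinear_iff_exists_forall_eq_smul_vadd]
  refine ⟨A₀, A₀' - A₀, ?_⟩
  rintro p ⟨i, rfl⟩
  obtain ⟨c, hc⟩ := hline i
  refine ⟨(t i)⁻¹ * c, ?_⟩
  have h1 : A i - A₀ = (t i)⁻¹ • (A' i - A₀) := by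
    rw [husub i, smul_smul, inv_mul_cancel₀ (ht i).ne', one_smul]
  have : A i = (A i - A₀) + A₀ := by abel
  rw [this, h1, hc, smul_smul]
  rfl
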